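/- If the continued fraction expansion of √f has even period 2m, and (c, h) is the fundamental solution of c² − f·h² = 1, then c = AₘB_{m−1} + A_{m−1}B_{m−2} and h = B_{m−1}(Bₘ + B_{m−2}), where Aₖ/Bₖ are the convergents of √f. -/

import Mathlib

/-- The pair `(rₖ, sₖ)` of the continued fraction algorithm for `√f`:
`r₀ = 0`, `s₀ = 1`, `r_{k+1} = aₖ sₖ − rₖ`, `s_{k+1} = (f − r_{k+1}²)/sₖ`,
where `aₖ = ⌊(√f + rₖ)/sₖ⌋ = ⌊(⌊√f⌋ + rₖ)/sₖ⌋`. -/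
def cfRS (f : ℕ) : ℕ → ℤ × ℤ
  | 0 => (0, 1)
  | k + 1 =>
    let p := cfRS f k
    let a := Int.fdiv ((Nat.sqrt f : ℤ) + p.1) p.2
    let r' := a * p.2 - p.1
    (r', Int.fdiv ((f : ℤ) - r' ^ 2) p.2)

/-- The `k`-th partial quotient `aₖ` of the continued fraction of `√f`. -/
def cfA (f : ℕ) (k : ℕ) : ℤ :=
  Int.fdiv ((Nat.sqrt f : ℤ) + (cfRS f k).1) (cfRS f k).2

/-- Numerators of the convergents of `√f`, shifted by 2:
`cfNum f (k+2) = Aₖ`, with `A₋₂ = 0`, `A₋₁ = 1`. -/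
def cfNum (f : ℕ) : ℕ → ℤ
  | 0 => 0
  | 1 => 1
  | k + 2 => cfA f k * cfNum f (k + 1) + cfNum f k

/-- Denominators of the convergents of `√f`, shifted by 2:
`cfDen f (k+2) = Bₖ`, with `B₋₂ = 1`, `B₋₁ = 0`. -/
def cfDen (f : ℕ) : ℕ → ℤ
  | 0 => 1
  | 1 => 0
  | k + 2 => cfA f k * cfDen f (k + 1) + cfDen f k

/-- `p` is a period of the (eventually periodic) partial quotient sequence of `√f`. -/
def CFIsPeriod (f p : ℕ) : Prop :=
  0 < p ∧ ∀ k, 1 ≤ k → cfA f (k + p) = cfA f k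

/-- `p` is the (minimal) period of the continued fraction expansion of `√f`. -/
def CFPeriod (f p : ℕ) : Prop :=
  CFIsPeriod f p ∧ ∀ q, CFIsPeriod f q → p ≤ q

/-- `(c, h)` is the fundamental (smallest positive) solution of `c² − f h² = 1`. -/
def IsFundamentalPell (f : ℕ) (c h : ℤ) : Prop :=
  0 < c ∧ 0 < h ∧ c ^ 2 - (f : ℤ) * h ^ 2 = 1 ∧
    ∀ c' h' : ℤ, 0 < c' → 0 < h' → c' ^ 2 - (f : ℤ) * h' ^ 2 = 1 → c ≤ c'

namespace CF

def rr (f : ℕ) (n : ℕ) : ℤ := (cfRS f n).1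
def ss (f : ℕ) (n : ℕ) : ℤ := (cfRS f n).2

variable (f : ℕ)
set_option linter.unusedSectionVars false

lemma rr_zero : rr f 0 = 0 := rfl
lemma ss_zero : ss f 0 = 1 := rfl
lemma rr_succ (n : ℕ) : rr f (n + 1) = cfA f n * ss f n - rr f n := rfl
lemma ss_succ (n : ℕ) : ss f (n + 1) = Int.fdiv ((f : ℤ) - rr f (n + 1) ^ 2) (ss f n) := rfl

lemma num_rec (n : ℕ) : cfNum f (n + 2) = cfA f n * cfNum f (n + 1) + cfNum f n := rfl
lemma den_rec (n : ℕ) : cfDen f (n + 2) = cfA f n * cfDen f (n + 1) + cfDen f n := rfl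

lemma sq_ne (hns : ¬ IsSquare f) (x : ℤ) : (f : ℤ) - x ^ 2 ≠ 0 := by
  intro h
  apply hns
  have h2 : (x.natAbs : ℤ) * (x.natAbs : ℤ) = (f : ℤ) := by
    rw [Int.natAbs_mul_self']; nlinarith [sq_nonneg x]
  have h3 : x.natAbs * x.natAbs = f := by exact_mod_cast h2
  exact ⟨x.natAbs, h3.symm⟩

lemma key (hns : ¬ IsSquare f) : ∀ n, ss f n ≠ 0 ∧ ss f n ∣ ((f : ℤ) - rr f n ^ 2) := by
  intro n
  induction n with
  | zero => exact ⟨one_ne_zero, one_dvd _⟩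
  | succ n ih =>
    obtain ⟨h0, hdvd⟩ := ih
    have hdvd2 : ss f n ∣ ((f : ℤ) - rr f (n + 1) ^ 2) := by
      have : (f : ℤ) - rr f (n + 1) ^ 2
          = ((f : ℤ) - rr f n ^ 2) - ss f n * (cfA f n ^ 2 * ss f n - 2 * cfA f n * rr f n) := by
        rw [rr_succ]; ring
      rw [this]
      exact dvd_sub hdvd (Dvd.intro _ rfl)
    obtain ⟨t, ht⟩ := hdvd2
    have hmul : ss f n * ss f (n + 1) = (f : ℤ) - rr f (n + 1) ^ 2 := by
      rw [ss_succ, ht, Int.mul_fdiv_cancel_left _ h0]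
    have hne : ss f (n + 1) ≠ 0 := by
      intro h
      exact sq_ne f hns (rr f (n + 1)) (by rw [← hmul, h, mul_zero])
    exact ⟨hne, Dvd.intro_left _ hmul⟩

lemma ss_ne_zero (hns : ¬ IsSquare f) (n : ℕ) : ss f n ≠ 0 := (key f hns n).1

lemma ss_mul (hns : ¬ IsSquare f) (n : ℕ) : ss f n * ss f (n + 1) = (f : ℤ) - rr f (n + 1) ^ 2 := by
  obtain ⟨h0, hdvd⟩ := key f hns n
  have hdvd2 : ss f n ∣ ((f : ℤ) - rr f (n + 1) ^ 2) := by
    have : (f : ℤ) - rr f (n + 1) ^ 2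
        = ((f : ℤ) - rr f n ^ 2) - ss f n * (cfA f n ^ 2 * ss f n - 2 * cfA f n * rr f n) := by
      rw [rr_succ]; ring
    rw [this]
    exact dvd_sub hdvd (Dvd.intro _ rfl)
  obtain ⟨t, ht⟩ := hdvd2
  rw [ss_succ, ht, Int.mul_fdiv_cancel_left _ h0]

lemma det (n : ℕ) : cfNum f (n + 1) * cfDen f n - cfNum f n * cfDen f (n + 1) = (-1) ^ n := by
  induction n with
  | zero => simp [cfNum, cfDen]
  | succ n ih =>
    rw [num_rec, den_rec, pow_succ]
    linear_combination (-1 : ℤ) * ih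

lemma lin (hns : ¬ IsSquare f) : ∀ n, cfNum f (n + 1) = rr f n * cfDen f (n + 1) + ss f n * cfDen f n ∧
    (f : ℤ) * cfDen f (n + 1) = rr f n * cfNum f (n + 1) + ss f n * cfNum f n := by
  intro n
  induction n with
  | zero => simp [cfNum, cfDen, rr_zero, ss_zero]
  | succ n ih =>
    obtain ⟨ih1, ih2⟩ := ih
    have hs := ss_ne_zero f hns n
    have hmul := ss_mul f hns n
    constructor
    · apply mul_left_cancel₀ hs
      rw [num_rec, den_rec, rr_succ] at *
      linear_combination (-(cfDen f (n+1)) : ℤ) * hmul - ih2 + (cfA f n * ss f n - rr f n) * ih1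
    · apply mul_left_cancel₀ hs
      rw [num_rec, den_rec, rr_succ] at *
      linear_combination (-(cfNum f (n+1)) : ℤ) * hmul + (cfA f n * ss f n - rr f n) * ih2
        - (f : ℤ) * ih1

lemma pell_s (hns : ¬ IsSquare f) (n : ℕ) : cfNum f (n + 1) ^ 2 - (f : ℤ) * cfDen f (n + 1) ^ 2
    = (-1) ^ n * ss f n := by
  obtain ⟨h1, h2⟩ := lin f hns n
  have hdet := det f n
  linear_combination cfNum f (n+1) * h1 - cfDen f (n+1) * h2 + ss f n * hdet

noncomputable def al (f : ℕ) : ℝ := Real.sqrt f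
noncomputable def xi (f : ℕ) (n : ℕ) : ℝ := (al f + (rr f n : ℝ)) / (ss f n : ℝ)
noncomputable def eta (f : ℕ) (n : ℕ) : ℝ := (-al f + (rr f n : ℝ)) / (ss f n : ℝ)

lemma al_sq : al f ^ 2 = (f : ℝ) := Real.sq_sqrt (by positivity)

lemma al_nonneg : 0 ≤ al f := Real.sqrt_nonneg _

lemma al_gt_one (hf2 : 2 ≤ f) : 1 < al f := by
  have h2 : (2 : ℝ) ≤ (f : ℝ) := by exact_mod_cast hf2
  nlinarith [al_sq f, al_nonneg f]

lemma al_irr (hns : ¬ IsSquare f) : Irrational (al f) := irrational_sqrt_natCast_iff.mpr hns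

lemma floor_div_int (x : ℝ) (d : ℤ) (hd : 0 < d) : ⌊x / (d : ℝ)⌋ = Int.fdiv ⌊x⌋ d := by
  rw [Int.fdiv_eq_ediv_of_nonneg _ hd.le]
  refine eq_of_forall_le_iff fun z => ?_
  rw [Int.le_floor, le_div_iff₀ (by exact_mod_cast hd), Int.le_ediv_iff_mul_le hd,
    Int.le_floor, Int.cast_mul]

lemma cfA_eq_floor (n : ℕ) (hsp : 0 < ss f n) : cfA f n = ⌊xi f n⌋ := by
  unfold xi
  rw [floor_div_int _ _ hsp]
  have : ⌊al f + (rr f n : ℝ)⌋ = (Nat.sqrt f : ℤ) + rr f n := by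
    rw [Int.floor_add_intCast, al, Real.floor_real_sqrt_eq_nat_sqrt]
  rw [this]
  rfl

lemma xi_irr (hns : ¬ IsSquare f) (n : ℕ) : Irrational (xi f n) :=
  ((al_irr f hns).add_intCast _).div_intCast (ss_ne_zero f hns n)

lemma xi_mul (hns : ¬ IsSquare f) (n : ℕ) :
    (xi f n - (cfA f n : ℝ)) * xi f (n + 1) = 1 := by
  have h1 : (ss f n : ℝ) ≠ 0 := by exact_mod_cast ss_ne_zero f hns n
  have h2 : (ss f (n + 1) : ℝ) ≠ 0 := by exact_mod_cast ss_ne_zero f hns (n + 1)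
  have hkey : (ss f n : ℝ) * (ss f (n + 1) : ℝ) = (f : ℝ) - (rr f (n + 1) : ℝ) ^ 2 := by
    exact_mod_cast congrArg (Int.cast : ℤ → ℝ) (ss_mul f hns n)
  have hr : (rr f (n + 1) : ℝ) = (cfA f n : ℝ) * (ss f n : ℝ) - (rr f n : ℝ) := by
    exact_mod_cast congrArg (Int.cast : ℤ → ℝ) (rr_succ f n)
  unfold xi
  field_simp
  linear_combination al_sq f - hkey + (al f + (rr f (n + 1) : ℝ)) * hr

lemma eta_mul (hns : ¬ IsSquare f) (n : ℕ) :
    (eta f n - (cfA f n : ℝ)) * eta f (n + 1) = 1 := by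
  have h1 : (ss f n : ℝ) ≠ 0 := by exact_mod_cast ss_ne_zero f hns n
  have h2 : (ss f (n + 1) : ℝ) ≠ 0 := by exact_mod_cast ss_ne_zero f hns (n + 1)
  have hkey : (ss f n : ℝ) * (ss f (n + 1) : ℝ) = (f : ℝ) - (rr f (n + 1) : ℝ) ^ 2 := by
    exact_mod_cast congrArg (Int.cast : ℤ → ℝ) (ss_mul f hns n)
  have hr : (rr f (n + 1) : ℝ) = (cfA f n : ℝ) * (ss f n : ℝ) - (rr f n : ℝ) := by
    exact_mod_cast congrArg (Int.cast : ℤ → ℝ) (rr_succ f n)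
  unfold eta
  field_simp
  linear_combination al_sq f - hkey + (-al f + (rr f (n + 1) : ℝ)) * hr

lemma xi_zero : xi f 0 = al f := by simp [xi, rr_zero, ss_zero]

lemma eta_zero : eta f 0 = -al f := by simp [eta, rr_zero, ss_zero]

lemma xi_sub_eta (n : ℕ) : xi f n - eta f n = 2 * al f / (ss f n : ℝ) := by
  unfold xi eta; ring

lemma inv (hns : ¬ IsSquare f) (hf2 : 2 ≤ f) :
    ∀ n, 0 < ss f n ∧ (1 ≤ n → 1 < xi f n ∧ -1 < eta f n ∧ eta f n < 0) := by
  intro n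
  induction n with
  | zero => exact ⟨one_pos, by omega⟩
  | succ n ih =>
    have hsp : 0 < ss f n := ih.1
    have ha : cfA f n = ⌊xi f n⌋ := cfA_eq_floor f n hsp
    have hxirr := xi_irr f hns n
    have hfr0 : 0 < xi f n - (cfA f n : ℝ) := by
      rw [ha]
      have h1 := Int.floor_le (xi f n)
      have h2 : xi f n ≠ (⌊xi f n⌋ : ℝ) := hxirr.ne_int _
      cases' lt_or_eq_of_le h1 with h h
      · linarith
      · exact absurd h.symm h2
    have hfr1 : xi f n - (cfA f n : ℝ) < 1 := by
      rw [ha]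
      have := Int.lt_floor_add_one (xi f n)
      linarith
    have hxm := xi_mul f hns n
    have hxpos : 0 < xi f (n + 1) := by nlinarith
    have hx1 : 1 < xi f (n + 1) := by nlinarith
    have hem := eta_mul f hns n
    have hd' : eta f n - (cfA f n : ℝ) < -1 := by
      rcases Nat.eq_zero_or_pos n with rfl | hn
      · have h0 : eta f 0 = -al f := eta_zero f
        have hb : (1 : ℤ) ≤ cfA f 0 := by
          rw [ha, xi_zero, Int.le_floor]
          exact_mod_cast (al_gt_one f hf2).le
        have hb' : (1 : ℝ) ≤ (cfA f 0 : ℝ) := by exact_mod_cast hb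
        have := al_gt_one f hf2
        rw [h0]; linarith
      · obtain ⟨hxg, heg1, heg2⟩ := ih.2 hn
        have hb : (1 : ℤ) ≤ cfA f n := by
          rw [ha, Int.le_floor]; exact_mod_cast hxg.le
        have hb' : (1 : ℝ) ≤ (cfA f n : ℝ) := by exact_mod_cast hb
        linarith
    have heneg : eta f (n + 1) < 0 := by nlinarith
    have heg : -1 < eta f (n + 1) := by nlinarith
    have hsp' : 0 < ss f (n + 1) := by
      have hne := ss_ne_zero f hns (n + 1)
      have hgap : 0 < xi f (n + 1) - eta f (n + 1) := by linarith
      rw [xi_sub_eta] at hgap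
      have hal : 0 < al f := by have := al_gt_one f hf2; linarith
      by_contra hle
      push_neg at hle
      have h3 : ss f (n + 1) < 0 := lt_of_le_of_ne hle hne
      have h4 : (ss f (n + 1) : ℝ) < 0 := by exact_mod_cast h3
      have : 2 * al f / (ss f (n + 1) : ℝ) < 0 := div_neg_of_pos_of_neg (by linarith) h4
      linarith
    exact ⟨hsp', fun _ => ⟨hx1, heg, heneg⟩⟩

lemma ss_pos (hns : ¬ IsSquare f) (hf2 : 2 ≤ f) (n : ℕ) : 0 < ss f n := (inv f hns hf2 n).1

lemma xi_gt_one (hns : ¬ IsSquare f) (hf2 : 2 ≤ f) : ∀ n, 1 < xi f n := by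
  intro n
  rcases Nat.eq_zero_or_pos n with rfl | hn
  · rw [xi_zero]; exact al_gt_one f hf2
  · exact ((inv f hns hf2 n).2 hn).1

lemma eta_bounds (hns : ¬ IsSquare f) (hf2 : 2 ≤ f) (n : ℕ) (hn : 1 ≤ n) :
    -1 < eta f n ∧ eta f n < 0 := ⟨((inv f hns hf2 n).2 hn).2.1, ((inv f hns hf2 n).2 hn).2.2⟩

lemma cfA_floor (hns : ¬ IsSquare f) (hf2 : 2 ≤ f) (n : ℕ) : cfA f n = ⌊xi f n⌋ :=
  cfA_eq_floor f n (ss_pos f hns hf2 n)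

lemma cfA_pos (hns : ¬ IsSquare f) (hf2 : 2 ≤ f) (n : ℕ) : 1 ≤ cfA f n := by
  rw [cfA_floor f hns hf2 n, Int.le_floor]
  exact_mod_cast (xi_gt_one f hns hf2 n).le
lemma conv (hns : ¬ IsSquare f) : ∀ n,
    al f * (xi f n * (cfDen f (n + 1) : ℝ) + (cfDen f n : ℝ))
      = xi f n * (cfNum f (n + 1) : ℝ) + (cfNum f n : ℝ) := by
  intro n
  induction n with
  | zero => simp [cfNum, cfDen, xi_zero]
  | succ n ih =>
    have e : xi f n * xi f (n + 1) = (cfA f n : ℝ) * xi f (n + 1) + 1 := by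
      linear_combination xi_mul f hns n
    have hnum : (cfNum f (n + 2) : ℝ) = (cfA f n : ℝ) * (cfNum f (n + 1) : ℝ) + (cfNum f n : ℝ) := by
      exact_mod_cast congrArg (Int.cast : ℤ → ℝ) (num_rec f n)
    have hden : (cfDen f (n + 2) : ℝ) = (cfA f n : ℝ) * (cfDen f (n + 1) : ℝ) + (cfDen f n : ℝ) := by
      exact_mod_cast congrArg (Int.cast : ℤ → ℝ) (den_rec f n)
    rw [hnum, hden]
    linear_combination xi f (n + 1) * ih
      + ((cfNum f (n + 1) : ℝ) - al f * (cfDen f (n + 1) : ℝ)) * e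

/-- ε n = Bₙ₋₁ α − Aₙ₋₁ -/
noncomputable def eps (f : ℕ) (n : ℕ) : ℝ := (cfDen f (n + 1) : ℝ) * al f - (cfNum f (n + 1) : ℝ)

lemma eps_zero : eps f 0 = -1 := by simp [eps, cfNum, cfDen]

lemma eps_succ (hns : ¬ IsSquare f) (n : ℕ) : xi f (n + 1) * eps f (n + 1) = -eps f n := by
  have h := conv f hns (n + 1)
  unfold eps
  -- need relation: al * (xi(n+1) D(n+2) + D(n+1)) = xi(n+1) N(n+2) + N(n+1)
  linear_combination h

lemma eps_sign (hns : ¬ IsSquare f) (hf2 : 2 ≤ f) : ∀ n, 0 < (-1) ^ (n + 1) * eps f n := by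
  intro n
  induction n with
  | zero => simp [eps_zero]
  | succ n ih =>
    have h := eps_succ f hns n
    have hx := xi_gt_one f hns hf2 (n + 1)
    have : eps f (n + 1) = -eps f n / xi f (n + 1) := by
      field_simp
      linear_combination h
    rw [this, pow_succ]
    rcases Nat.even_or_odd n with he | ho
    · have h1 : (-1 : ℝ) ^ (n + 1) = -1 := by
        rw [pow_succ, Even.neg_one_pow he]; ring
      rw [h1] at ih ⊢
      have hen : 0 < -eps f n := by linarith
      have : 0 < -eps f n / xi f (n + 1) := div_pos hen (by linarith)
      nlinarith
    · have h1 : (-1 : ℝ) ^ (n + 1) = 1 := Odd.add_one ho |>.neg_one_pow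
      rw [h1] at ih ⊢
      have : eps f n / xi f (n + 1) > 0 := div_pos (by linarith) (by linarith)
      have h2 : -eps f n / xi f (n + 1) < 0 := by
        rw [neg_div]; linarith
      nlinarith

lemma eps_ne (hns : ¬ IsSquare f) (hf2 : 2 ≤ f) (n : ℕ) : eps f n ≠ 0 := by
  have := eps_sign f hns hf2 n
  intro h; rw [h] at this; simp at this

lemma den_facts (hns : ¬ IsSquare f) (hf2 : 2 ≤ f) : ∀ n,
    1 ≤ cfDen f (n + 2) ∧ cfDen f (n + 1) ≤ cfDen f (n + 2) ∧ 0 ≤ cfDen f (n + 1) := by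
  intro n
  induction n with
  | zero => simp [cfDen]
  | succ n ih =>
    obtain ⟨h1, h2, h3⟩ := ih
    have ha := cfA_pos f hns hf2 (n + 1)
    have hrec := den_rec f (n + 1)
    refine ⟨?_, ?_, by linarith⟩ <;> nlinarith

lemma num_facts (hns : ¬ IsSquare f) (hf2 : 2 ≤ f) : ∀ n,
    1 ≤ cfNum f (n + 1) ∧ cfNum f (n + 1) ≤ cfNum f (n + 2) := by
  intro n
  induction n with
  | zero =>
    have ha := cfA_pos f hns hf2 0
    constructor
    · simp [cfNum]
    · have : cfNum f 2 = cfA f 0 := by simp [num_rec f 0, cfNum]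
      simp [cfNum, this]; omega
  | succ n ih =>
    obtain ⟨h1, h2⟩ := ih
    have ha := cfA_pos f hns hf2 (n + 1)
    have hrec := num_rec f (n + 1)
    constructor
    · linarith
    · nlinarith

lemma num_mono (hns : ¬ IsSquare f) (hf2 : 2 ≤ f) {k l : ℕ} (h : k ≤ l) :
    cfNum f (k + 1) ≤ cfNum f (l + 1) := by
  induction l with
  | zero => simp_all
  | succ l ih =>
    rcases Nat.lt_or_ge k (l + 1) with hlt | hge
    · exact le_trans (ih (by omega)) (num_facts f hns hf2 l).2
    · have : k = l + 1 := by omega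
      subst this; rfl

lemma den_unbounded (hns : ¬ IsSquare f) (hf2 : 2 ≤ f) : ∀ j : ℕ, (j : ℤ) + 1 ≤ cfDen f (2 * j + 2) := by
  intro j
  induction j with
  | zero => simp [cfDen]
  | succ j ih =>
    have h1 := (den_facts f hns hf2 (2 * j + 1)).1
    have ha := cfA_pos f hns hf2 (2 * j + 2)
    have hd0 := (den_facts f hns hf2 (2 * j)).1
    have hrec := den_rec f (2 * j + 2)
    have : (2 * (j + 1) + 2) = (2 * j + 2) + 2 := by ring
    rw [this, hrec]
    push_cast
    nlinarith
lemma xi_pos (hns : ¬ IsSquare f) (hf2 : 2 ≤ f) (n : ℕ) : 0 < xi f n := by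
  have := xi_gt_one f hns hf2 n; linarith

lemma xi_eq_add_inv (hns : ¬ IsSquare f) (hf2 : 2 ≤ f) (n : ℕ) :
    xi f n = (cfA f n : ℝ) + 1 / xi f (n + 1) := by
  have h := xi_mul f hns n
  have hx := xi_pos f hns hf2 (n + 1)
  field_simp
  linear_combination h

lemma two_le_pair (hns : ¬ IsSquare f) (hf2 : 2 ≤ f) (k : ℕ) :
    2 ≤ xi f k * xi f (k + 1) := by
  have h := xi_mul f hns k
  have ha : (1 : ℝ) ≤ (cfA f k : ℝ) := by exact_mod_cast cfA_pos f hns hf2 k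
  have hx := xi_gt_one f hns hf2 (k + 1)
  nlinarith

lemma prod_ge (hns : ¬ IsSquare f) (hf2 : 2 ≤ f) (t : ℕ) :
    ∀ i : ℕ, (2 : ℝ) ^ i ≤ ∏ j ∈ Finset.range (2 * i), xi f (t + j) := by
  intro i
  induction i with
  | zero => simp
  | succ i ih =>
    have h1 : 2 * (i + 1) = (2 * i) + 1 + 1 := by ring
    rw [h1, Finset.prod_range_succ, Finset.prod_range_succ]
    have h2 := two_le_pair f hns hf2 (t + 2 * i)
    have h3 : t + 2 * i + 1 = t + (2 * i + 1) := by ring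
    rw [h3] at h2
    have hpos : (0 : ℝ) < ∏ j ∈ Finset.range (2 * i), xi f (t + j) := by
      apply Finset.prod_pos
      intro j _
      exact xi_pos f hns hf2 _
    rw [pow_succ]
    calc (2 : ℝ) ^ i * 2 ≤ (∏ j ∈ Finset.range (2 * i), xi f (t + j)) * 2 := by nlinarith
    _ ≤ (∏ j ∈ Finset.range (2 * i), xi f (t + j)) * (xi f (t + 2 * i) * xi f (t + (2 * i + 1)))
        := by nlinarith
    _ = (∏ j ∈ Finset.range (2 * i), xi f (t + j)) * xi f (t + 2 * i) * xi f (t + (2 * i + 1))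
        := by ring

lemma prod_pair_ge (hns : ¬ IsSquare f) (hf2 : 2 ≤ f) (t p : ℕ) (i : ℕ) :
    (2 : ℝ) ^ i ≤ ∏ j ∈ Finset.range (2 * i), (xi f (t + j) * xi f (t + p + j)) := by
  rw [Finset.prod_mul_distrib]
  have h1 := prod_ge f hns hf2 t i
  have h2 : (1 : ℝ) ≤ ∏ j ∈ Finset.range (2 * i), xi f (t + p + j) := by
    induction (2 * i) with
    | zero => simp
    | succ n ih =>
      rw [Finset.prod_range_succ]
      have := xi_gt_one f hns hf2 (t + p + n)
      nlinarith
  have hpos : (0 : ℝ) < ∏ j ∈ Finset.range (2 * i), xi f (t + j) := by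
    apply Finset.prod_pos; intro j _; exact xi_pos f hns hf2 _
  nlinarith

lemma delta_step (hns : ¬ IsSquare f) (hf2 : 2 ≤ f) {k l : ℕ} (hA : cfA f k = cfA f l) :
    xi f k - xi f l = -(xi f (k + 1) - xi f (l + 1)) / (xi f (k + 1) * xi f (l + 1)) := by
  have e1 := xi_eq_add_inv f hns hf2 k
  have e2 := xi_eq_add_inv f hns hf2 l
  have h1 := xi_pos f hns hf2 (k + 1)
  have h2 := xi_pos f hns hf2 (l + 1)
  rw [e1, e2, hA]
  field_simp
  ring

lemma delta_small (hns : ¬ IsSquare f) (hf2 : 2 ≤ f) {k l : ℕ} (hA : cfA f k = cfA f l) :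
    |xi f k - xi f l| ≤ 1 := by
  have e1 := xi_eq_add_inv f hns hf2 k
  have e2 := xi_eq_add_inv f hns hf2 l
  have h1 := xi_gt_one f hns hf2 (k + 1)
  have h2 := xi_gt_one f hns hf2 (l + 1)
  have i1 : 0 < 1 / xi f (k + 1) := by positivity
  have i2 : 1 / xi f (k + 1) < 1 := by rw [div_lt_one (by linarith)]; linarith
  have i3 : 0 < 1 / xi f (l + 1) := by positivity
  have i4 : 1 / xi f (l + 1) < 1 := by rw [div_lt_one (by linarith)]; linarith
  rw [e1, e2, hA, abs_le]
  constructor <;> [nlinarith; nlinarith]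

lemma delta_prod (hns : ¬ IsSquare f) (hf2 : 2 ≤ f) {p : ℕ}
    (hp : ∀ k, 1 ≤ k → cfA f (k + p) = cfA f k) (t : ℕ) (ht : 1 ≤ t) :
    ∀ n, |xi f t - xi f (t + p)| * ∏ j ∈ Finset.range n, (xi f (t + 1 + j) * xi f (t + 1 + p + j))
      = |xi f (t + n) - xi f (t + p + n)| := by
  intro n
  induction n with
  | zero => simp
  | succ n ih =>
    rw [Finset.prod_range_succ, ← mul_assoc, ih]
    have hA : cfA f (t + n) = cfA f (t + p + n) := by
      have := hp (t + n) (by omega)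
      rw [show t + n + p = t + p + n by ring] at this
      exact this.symm
    have hstep := delta_step f hns hf2 hA
    have h1 := xi_pos f hns hf2 (t + n + 1)
    have h2 := xi_pos f hns hf2 (t + p + n + 1)
    have hxx : 0 < xi f (t + n + 1) * xi f (t + p + n + 1) := mul_pos h1 h2
    rw [show t + (n + 1) = t + n + 1 by ring, show t + p + (n + 1) = t + p + n + 1 by ring,
      show t + 1 + n = t + n + 1 by ring, show t + 1 + p + n = t + p + n + 1 by ring]
    rw [hstep, abs_div, abs_neg, abs_of_pos hxx, div_mul_cancel₀ _ (ne_of_gt hxx)]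

lemma xi_period (hns : ¬ IsSquare f) (hf2 : 2 ≤ f) {p : ℕ}
    (hp : ∀ k, 1 ≤ k → cfA f (k + p) = cfA f k) (t : ℕ) (ht : 1 ≤ t) :
    xi f (t + p) = xi f t := by
  by_contra hne
  have habs : 0 < |xi f t - xi f (t + p)| := by
    rw [abs_pos]
    intro h
    exact hne (sub_eq_zero.mp h).symm
  obtain ⟨i, hi⟩ := pow_unbounded_of_one_lt (1 / |xi f t - xi f (t + p)|) (one_lt_two (α := ℝ))
  have h1 := delta_prod f hns hf2 hp t ht (2 * i)
  have h2 : (2 : ℝ) ^ i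
      ≤ ∏ j ∈ Finset.range (2 * i), (xi f (t + 1 + j) * xi f (t + 1 + p + j)) := by
    have := prod_pair_ge f hns hf2 (t + 1) p i
    have hre : ∀ j, t + 1 + p + j = t + 1 + p + j := fun _ => rfl
    convert this using 2
  have hA : cfA f (t + 2 * i) = cfA f (t + p + 2 * i) := by
    have := hp (t + 2 * i) (by omega)
    rw [show t + 2 * i + p = t + p + 2 * i by ring] at this
    exact this.symm
  have h3 := delta_small f hns hf2 hA
  have h4 : |xi f t - xi f (t + p)| * (2 : ℝ) ^ i ≤ 1 := by
    have h5 : |xi f t - xi f (t + p)| * (2 : ℝ) ^ i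
        ≤ |xi f t - xi f (t + p)|
          * ∏ j ∈ Finset.range (2 * i), (xi f (t + 1 + j) * xi f (t + 1 + p + j)) := by
      nlinarith
    rw [h1] at h5
    exact h5.trans h3
  rw [div_lt_iff₀ habs] at hi
  nlinarith
lemma cfA_state {n n' : ℕ} (h1 : rr f n = rr f n') (h2 : ss f n = ss f n') :
    cfA f n = cfA f n' := by
  show Int.fdiv ((Nat.sqrt f : ℤ) + rr f n) (ss f n)
    = Int.fdiv ((Nat.sqrt f : ℤ) + rr f n') (ss f n')
  rw [h1, h2]

lemma cfA_zero : cfA f 0 = (Nat.sqrt f : ℤ) := by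
  show Int.fdiv ((Nat.sqrt f : ℤ) + rr f 0) (ss f 0) = (Nat.sqrt f : ℤ)
  rw [rr_zero, ss_zero, add_zero, Int.fdiv_one]

lemma rr_one : rr f 1 = (Nat.sqrt f : ℤ) := by
  rw [rr_succ, cfA_zero, ss_zero, rr_zero]; ring

lemma ss_one (hns : ¬ IsSquare f) : ss f 1 = (f : ℤ) - (Nat.sqrt f : ℤ) ^ 2 := by
  have h := ss_mul f hns 0
  rw [ss_zero, one_mul, rr_one] at h
  exact h

lemma state_period (hns : ¬ IsSquare f) (hf2 : 2 ≤ f) {p : ℕ}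
    (hp : ∀ k, 1 ≤ k → cfA f (k + p) = cfA f k) (t : ℕ) (ht : 1 ≤ t) :
    rr f (t + p) = rr f t ∧ ss f (t + p) = ss f t := by
  have hx := xi_period f hns hf2 hp t ht
  have hs1 : (0:ℤ) < ss f t := ss_pos f hns hf2 t
  have hs2 : (0:ℤ) < ss f (t + p) := ss_pos f hns hf2 (t + p)
  have hs1' : (ss f t : ℝ) ≠ 0 := by positivity
  have hs2' : (ss f (t + p) : ℝ) ≠ 0 := by positivity
  unfold xi at hx
  rw [div_eq_div_iff hs2' hs1'] at hx
  -- hx : (al f + rr f (t+p)) * ss f t = (al f + rr f t) * ss f (t+p)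
  have hss : ss f (t + p) = ss f t := by
    by_contra hne
    have hd : ((ss f t - ss f (t + p) : ℤ) : ℝ) ≠ 0 := by
      intro h
      apply hne
      have : (ss f t - ss f (t + p) : ℤ) = 0 := by exact_mod_cast h
      omega
    apply al_irr f hns
    refine ⟨((rr f t * ss f (t + p) - rr f (t + p) * ss f t : ℤ) : ℚ)
      / ((ss f t - ss f (t + p) : ℤ) : ℚ), ?_⟩
    push_cast at hx ⊢
    rw [div_eq_iff (by exact_mod_cast hd)]
    push_cast
    nlinarith [hx]
  refine ⟨?_, hss⟩
  rw [hss] at hx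
  have := mul_right_cancel₀ hs1' hx
  have h2 : (rr f (t + p) : ℝ) = (rr f t : ℝ) := by linarith
  exact_mod_cast h2

lemma ss_p_one (hns : ¬ IsSquare f) (hf2 : 2 ≤ f) {p : ℕ} (hp0 : 0 < p)
    (hp : ∀ k, 1 ≤ k → cfA f (k + p) = cfA f k) : ss f p = 1 := by
  obtain ⟨hr1, hs1⟩ := state_period f hns hf2 hp 1 le_rfl
  have hm := ss_mul f hns p
  rw [show p + 1 = 1 + p by ring, hr1, hs1, rr_one] at hm
  have h0 := ss_one f hns
  have hne := ss_ne_zero f hns 1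
  have : ss f p * ss f 1 = ss f 1 := by rw [hm, h0]
  have := mul_right_cancel₀ hne (this.trans (one_mul (ss f 1)).symm)
  exact this

lemma state_period_of_s_one (hns : ¬ IsSquare f) {k : ℕ} (hk : ss f k = 1) :
    ∀ j, 1 ≤ j → rr f (k + j) = rr f j ∧ ss f (k + j) = ss f j := by
  have base : rr f (k + 1) = rr f 1 ∧ ss f (k + 1) = ss f 1 := by
    have hr : rr f (k + 1) = (Nat.sqrt f : ℤ) := by
      rw [rr_succ, hk, mul_one]
      show Int.fdiv ((Nat.sqrt f : ℤ) + rr f k) (ss f k) - rr f k = _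
      rw [hk, Int.fdiv_one]; ring
    constructor
    · rw [hr, rr_one]
    · have h1 := ss_mul f hns k
      rw [hk, one_mul, hr] at h1
      rw [h1, ss_one f hns]
  intro j hj
  induction j with
  | zero => omega
  | succ j ih =>
    rcases Nat.eq_zero_or_pos j with rfl | hj1
    · exact base
    · obtain ⟨ihr, ihs⟩ := ih hj1
      have hA : cfA f (k + j) = cfA f j := cfA_state f ihr ihs
      have hr : rr f (k + j + 1) = rr f (j + 1) := by
        rw [rr_succ, rr_succ, hA, ihr, ihs]
      have hs : ss f (k + j + 1) = ss f (j + 1) := by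
        have h1 := ss_mul f hns (k + j)
        have h2 := ss_mul f hns j
        rw [hr] at h1
        rw [ihs] at h1
        have := h1.trans h2.symm
        exact mul_left_cancel₀ (ss_ne_zero f hns j) this
      rw [show k + (j + 1) = k + j + 1 by ring]
      exact ⟨hr, hs⟩

lemma period_of_s_one (hns : ¬ IsSquare f) {k : ℕ} (hk1 : 1 ≤ k) (hk : ss f k = 1) :
    CFIsPeriod f k := by
  refine ⟨hk1, fun j hj => ?_⟩
  obtain ⟨h1, h2⟩ := state_period_of_s_one f hns hk j hj
  rw [show j + k = k + j by ring]
  exact cfA_state f h1 h2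
set_option maxHeartbeats 1000000 in
lemma den_two : cfDen f 2 = 1 := by simp [den_rec f 0, cfDen]

lemma exists_k (hns : ¬ IsSquare f) (hf2 : 2 ≤ f) (y : ℤ) (hy : 1 ≤ y) :
    ∃ k, cfDen f (k + 2) ≤ y ∧ y < cfDen f (k + 3) := by
  have hK : ∃ K, y < cfDen f (K + 2) := by
    refine ⟨2 * y.toNat + 2, ?_⟩
    have h1 := den_unbounded f hns hf2 (y.toNat + 1)
    have h2 : (y.toNat : ℤ) = y := Int.toNat_of_nonneg (by omega)
    have h3 : 2 * (y.toNat + 1) + 2 = 2 * y.toNat + 2 + 2 := by ring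
    rw [h3] at h1
    push_cast at h1
    omega
  obtain ⟨K, hK⟩ := hK
  have main : ∀ K, y < cfDen f (K + 2) → ∃ k, cfDen f (k + 2) ≤ y ∧ y < cfDen f (k + 3) := by
    intro K
    induction K with
    | zero =>
      intro h
      rw [den_two] at h
      omega
    | succ K ih =>
      intro h
      by_cases hc : y < cfDen f (K + 2)
      · exact ih hc
      · exact ⟨K, not_lt.mp hc, h⟩
  exact main K hK

set_option maxHeartbeats 1600000 in
lemma sol_ge (hns : ¬ IsSquare f) (hf2 : 2 ≤ f) {m : ℕ} (hm : 1 ≤ m)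
    (hper : CFPeriod f (2 * m)) (x y : ℤ) (hx : 0 < x) (hy : 0 < y)
    (hpell : x ^ 2 - (f : ℤ) * y ^ 2 = 1) : cfNum f (2 * m + 1) ≤ x := by
  obtain ⟨k, hyD1, hyD2⟩ := exists_k f hns hf2 y hy
  set N1 := cfNum f (k + 2) with hN1
  set N2 := cfNum f (k + 3) with hN2
  set D1 := cfDen f (k + 2) with hD1
  set D2 := cfDen f (k + 3) with hD2
  have hdet : N2 * D1 - N1 * D2 = (-1) ^ (k + 2) := det f (k + 2)
  set δ : ℤ := (-1) ^ (k + 2) with hδdef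
  have hδ : δ * δ = 1 := by
    rw [hδdef, ← pow_add]
    exact Even.neg_one_pow ⟨k + 2, by ring⟩
  set u : ℤ := -δ * (x * D2 - y * N2) with hu
  set v : ℤ := -δ * (y * N1 - x * D1) with hv
  have hxa : x = u * N1 + v * N2 := by
    rw [hu, hv]
    linear_combination (-x) * hδ + (-δ * x) * hdet
  have hya : y = u * D1 + v * D2 := by
    rw [hu, hv]
    linear_combination (-y) * hδ + (-δ * y) * hdet
  have hD1pos : 1 ≤ D1 := (den_facts f hns hf2 k).1
  have hD2pos : 1 ≤ D2 := (den_facts f hns hf2 (k + 1)).1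
  have hN1pos : 1 ≤ N1 := (num_facts f hns hf2 (k + 1)).1
  by_cases hv0 : v = 0
  · -- x = u N1, y = u D1, u = 1
    rw [hv0] at hxa hya
    simp only [mul_zero, zero_mul, add_zero] at hxa hya
    have hu1 : 1 ≤ u := by nlinarith
    have hps := pell_s f hns (k + 1)
    -- (u N1)^2 - f (u D1)^2 = 1
    have hq : u ^ 2 * ((-1) ^ (k + 1) * ss f (k + 1)) = 1 := by
      rw [← hps]; rw [hxa, hya] at hpell; linear_combination hpell
    have hspos : 1 ≤ ss f (k + 1) := ss_pos f hns hf2 (k + 1)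
    rcases Nat.even_or_odd (k + 1) with hpar | hpar
    · have hsign : ((-1 : ℤ)) ^ (k + 1) = 1 := Even.neg_one_pow hpar
      rw [hsign, one_mul] at hq
      have hu2 : 1 ≤ u ^ 2 := by nlinarith
      have h3 : ss f (k + 1) ≤ u ^ 2 * ss f (k + 1) :=
        le_mul_of_one_le_left (by omega) hu2
      have hs1 : ss f (k + 1) = 1 := by linarith
      have h4 : u ^ 2 ≤ u ^ 2 * ss f (k + 1) := le_mul_of_one_le_right (by positivity) hspos
      have h5 : u ≤ u ^ 2 := by
        nlinarith [mul_nonneg (by omega : (0:ℤ) ≤ u - 1) (by omega : (0:ℤ) ≤ u)]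
      have hu' : u = 1 := by omega
      have hperk : CFIsPeriod f (k + 1) := period_of_s_one f hns (by omega) hs1
      have h2m : 2 * m ≤ k + 1 := hper.2 _ hperk
      have := num_mono f hns hf2 h2m
      rw [hxa, hu', one_mul]
      exact this
    · exfalso
      have hsign : ((-1 : ℤ)) ^ (k + 1) = -1 := Odd.neg_one_pow hpar
      rw [hsign] at hq
      nlinarith
  · -- v ≠ 0
    by_cases hu0 : u = 0
    · exfalso
      rw [hu0] at hya
      simp only [zero_mul, zero_add] at hya
      have hv1 : 1 ≤ v := by nlinarith
      nlinarith
    · -- u ≠ 0 and v ≠ 0 : contradiction with reals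
      exfalso
      have huv : u * v < 0 := by
        rcases lt_trichotomy u 0 with h1 | h1 | h1
        · rcases lt_trichotomy v 0 with h2 | h2 | h2
          · exfalso; nlinarith
          · exact absurd h2 hv0
          · nlinarith
        · exact absurd h1 hu0
        · rcases lt_trichotomy v 0 with h2 | h2 | h2
          · nlinarith
          · exact absurd h2 hv0
          · exfalso; nlinarith
      set A := al f with hA
      have hA1 : 1 < A := al_gt_one f hf2
      have hfA : A ^ 2 = (f : ℝ) := al_sq f
      have hXpos : 0 < (x:ℝ) := by exact_mod_cast hx
      have hYpos : 0 < (y:ℝ) := by exact_mod_cast hy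
      have hY1 : 1 ≤ (y:ℝ) := by exact_mod_cast hy
      have hpellR : (x:ℝ) ^ 2 - (f : ℝ) * (y:ℝ) ^ 2 = 1 := by exact_mod_cast hpell
      have hprod : ((x:ℝ) - (y:ℝ) * A) * ((x:ℝ) + (y:ℝ) * A) = 1 := by
        rw [← hfA] at hpellR; linear_combination hpellR
      have hXgtYA : (y:ℝ) * A < (x:ℝ) := by nlinarith
      have hXsub : 0 < (x:ℝ) - (y:ℝ) * A := by linarith
      have hsmall : 2 * (y:ℝ) * ((x:ℝ) - (y:ℝ) * A) < 1 := by nlinarith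
      -- epsilon values
      set E1 := eps f (k + 1) with hE1def
      set E2 := eps f (k + 2) with hE2def
      have hE1eq : E1 = (D1 : ℝ) * A - (N1 : ℝ) := rfl
      have hE2eq : E2 = (D2 : ℝ) * A - (N2 : ℝ) := rfl
      have hs1 := eps_sign f hns hf2 (k + 1)
      have hs2 := eps_sign f hns hf2 (k + 2)
      have hyx : (y:ℝ) * A - (x:ℝ) = (u : ℝ) * E1 + (v : ℝ) * E2 := by
        have hxa' : (x:ℝ) = (u : ℝ) * (N1 : ℝ) + (v : ℝ) * (N2 : ℝ) := by exact_mod_cast hxa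
        have hya' : (y:ℝ) = (u : ℝ) * (D1 : ℝ) + (v : ℝ) * (D2 : ℝ) := by exact_mod_cast hya
        rw [hE1eq, hE2eq, hxa', hya']; ring
      have hvid : ((x * D1 - y * N1 : ℤ) : ℝ) = (D1 : ℝ) * ((x:ℝ) - (y:ℝ) * A) + (y:ℝ) * E1 := by
        rw [hE1eq]; push_cast; ring
      have hD1Y : (D1 : ℝ) ≤ (y:ℝ) := by exact_mod_cast hyD1
      have hD1R : (1 : ℝ) ≤ (D1 : ℝ) := by exact_mod_cast hD1pos
      rcases Nat.even_or_odd k with hpar | hpar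
      · -- k even : E1 > 0, E2 < 0, δ = 1
        have p1 : ((-1 : ℝ)) ^ (k + 1 + 1) = 1 := Even.neg_one_pow (by
          rcases hpar with ⟨t, ht⟩; exact ⟨t + 1, by omega⟩)
        have p2 : ((-1 : ℝ)) ^ (k + 2 + 1) = -1 := Odd.neg_one_pow (by
          rcases hpar with ⟨t, ht⟩; exact ⟨t + 1, by omega⟩)
        rw [p1, one_mul] at hs1
        rw [p2] at hs2
        have hE2neg : E2 < 0 := by nlinarith
        have hδ1 : δ = 1 := by
          rw [hδdef]; exact Even.neg_one_pow (by rcases hpar with ⟨t, ht⟩; exact ⟨t + 1, by omega⟩)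
        rcases lt_trichotomy u 0 with hus | hus | hus
        · -- u ≤ -1, v ≥ 1 : bound case
          have hvpos : 1 ≤ v := by nlinarith
          have huR : (u : ℝ) ≤ -1 := by exact_mod_cast (by omega : u ≤ -1)
          have hvR : (1 : ℝ) ≤ (v : ℝ) := by exact_mod_cast hvpos
          have hE1le : E1 ≤ (x:ℝ) - (y:ℝ) * A := by nlinarith
          -- v = x D1 - y N1
          have hveq : (v : ℝ) = (D1 : ℝ) * ((x:ℝ) - (y:ℝ) * A) + (y:ℝ) * E1 := by
            rw [← hvid, hv, hδ1]; push_cast; ring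
          nlinarith
        · exact absurd hus hu0
        · -- u ≥ 1, v ≤ -1 : sign contradiction
          have hvneg : v ≤ -1 := by nlinarith
          have huR : (1 : ℝ) ≤ (u : ℝ) := by exact_mod_cast hus
          have hvR : (v : ℝ) ≤ -1 := by exact_mod_cast hvneg
          nlinarith
      · -- k odd : E1 < 0, E2 > 0, δ = -1
        have p1 : ((-1 : ℝ)) ^ (k + 1 + 1) = -1 := Odd.neg_one_pow (by
          rcases hpar with ⟨t, ht⟩; exact ⟨t + 1, by omega⟩)
        have p2 : ((-1 : ℝ)) ^ (k + 2 + 1) = 1 := Even.neg_one_pow (by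
          rcases hpar with ⟨t, ht⟩; exact ⟨t + 2, by omega⟩)
        rw [p1] at hs1
        rw [p2, one_mul] at hs2
        have hE1neg : E1 < 0 := by nlinarith
        have hδ1 : δ = -1 := by
          rw [hδdef]; exact Odd.neg_one_pow (by rcases hpar with ⟨t, ht⟩; exact ⟨t + 1, by omega⟩)
        rcases lt_trichotomy u 0 with hus | hus | hus
        · -- u ≤ -1, v ≥ 1 : sign contradiction
          have hvpos : 1 ≤ v := by nlinarith
          have huR : (u : ℝ) ≤ -1 := by exact_mod_cast (by omega : u ≤ -1)
          have hvR : (1 : ℝ) ≤ (v : ℝ) := by exact_mod_cast hvpos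
          nlinarith
        · exact absurd hus hu0
        · -- u ≥ 1, v ≤ -1 : bound case
          have hvneg : v ≤ -1 := by nlinarith
          have huR : (1 : ℝ) ≤ (u : ℝ) := by exact_mod_cast hus
          have hvR : (v : ℝ) ≤ -1 := by exact_mod_cast hvneg
          have hveq : (-v : ℝ) = (D1 : ℝ) * ((x:ℝ) - (y:ℝ) * A) + (y:ℝ) * E1 := by
            rw [← hvid, hv, hδ1]; push_cast; ring
          nlinarith
noncomputable def beta (f : ℕ) (n : ℕ) : ℝ := -(eta f n)⁻¹

lemma beta_state {n n' : ℕ} (h1 : rr f n = rr f n') (h2 : ss f n = ss f n') :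
    beta f n = beta f n' := by
  unfold beta eta
  rw [h1, h2]

lemma eta_ne (hns : ¬ IsSquare f) (hf2 : 2 ≤ f) (n : ℕ) (hn : 1 ≤ n) : eta f n ≠ 0 :=
  (eta_bounds f hns hf2 n hn).2.ne

lemma eta_beta (hns : ¬ IsSquare f) (hf2 : 2 ≤ f) (n : ℕ) (hn : 1 ≤ n) :
    eta f n * beta f n = -1 := by
  unfold beta
  rw [mul_neg, mul_inv_cancel₀ (eta_ne f hns hf2 n hn)]

lemma beta_succ (hns : ¬ IsSquare f) (n : ℕ) :
    beta f (n + 1) = (cfA f n : ℝ) - eta f n := by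
  have h := eta_mul f hns n
  have hne : eta f (n + 1) ≠ 0 := right_ne_zero_of_mul_eq_one h
  unfold beta
  field_simp
  linear_combination h

lemma beta_gt_one (hns : ¬ IsSquare f) (hf2 : 2 ≤ f) (n : ℕ) (hn : 1 ≤ n) :
    1 < beta f n := by
  obtain ⟨he1, he2⟩ := eta_bounds f hns hf2 n hn
  have hb := eta_beta f hns hf2 n hn
  nlinarith

lemma floor_beta (hns : ¬ IsSquare f) (hf2 : 2 ≤ f) (n : ℕ) (hn : 1 ≤ n) :
    ⌊beta f (n + 1)⌋ = cfA f n := by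
  obtain ⟨he1, he2⟩ := eta_bounds f hns hf2 n hn
  rw [beta_succ f hns n, Int.floor_eq_iff]
  refine ⟨by linarith, by push_cast; linarith⟩

lemma beta_one (hns : ¬ IsSquare f) (hf2 : 2 ≤ f) :
    beta f 1 = al f + (Nat.sqrt f : ℤ) := by
  have hne := eta_ne f hns hf2 1 le_rfl
  have hs1 : (ss f 1 : ℝ) ≠ 0 := by exact_mod_cast ss_ne_zero f hns 1
  have hprod : eta f 1 * (al f + (Nat.sqrt f : ℤ)) = -1 := by
    unfold eta
    rw [rr_one]
    have h1 : (ss f 1 : ℝ) = (f : ℝ) - (Nat.sqrt f : ℤ) ^ 2 := by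
      exact_mod_cast congrArg (Int.cast : ℤ → ℝ) (ss_one f hns)
    rw [div_mul_eq_mul_div, div_eq_iff hs1, h1]
    push_cast
    linear_combination -al_sq f
  have hb := eta_beta f hns hf2 1 le_rfl
  have := mul_left_cancel₀ hne (hb.trans hprod.symm)
  exact this

lemma al_floor : ⌊al f⌋ = (Nat.sqrt f : ℤ) := Real.floor_real_sqrt_eq_nat_sqrt

lemma xi_one_eq (hns : ¬ IsSquare f) : (al f - (Nat.sqrt f : ℤ)) * xi f 1 = 1 := by
  have h := xi_mul f hns 0
  rw [xi_zero, cfA_zero] at h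
  exact h

lemma claimC (hns : ¬ IsSquare f) (hf2 : 2 ≤ f) {p : ℕ} (hp2 : 2 ≤ p)
    (hst : rr f (1 + p) = rr f 1 ∧ ss f (1 + p) = ss f 1) :
    ∀ k, k ≤ p - 1 → beta f (p - k) = xi f (k + 1) := by
  have base : beta f p = xi f 1 := by
    have hb1 : beta f (p + 1) = beta f 1 := by
      have := beta_state f (n := p + 1) (n' := 1)
      rw [show p + 1 = 1 + p by ring]
      exact beta_state f hst.1 hst.2
    have hfl : ⌊beta f (p + 1)⌋ = cfA f p := floor_beta f hns hf2 p (by omega)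
    have hb1v : beta f (p + 1) = al f + (Nat.sqrt f : ℤ) := by
      rw [hb1, beta_one f hns hf2]
    have hap : cfA f p = 2 * (Nat.sqrt f : ℤ) := by
      rw [← hfl, hb1v, Int.floor_add_intCast, al_floor]; ring
    have hetap : eta f p = (Nat.sqrt f : ℤ) - al f := by
      have := beta_succ f hns p
      rw [hb1v, hap] at this
      push_cast at this ⊢
      linarith
    have he1 : (al f - (Nat.sqrt f : ℤ)) * beta f p = 1 := by
      have hb := eta_beta f hns hf2 p (by omega)
      rw [hetap] at hb
      linarith [hb]
    have he2 := xi_one_eq f hns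
    have hne : (al f - (Nat.sqrt f : ℤ)) ≠ 0 := by
      intro h
      rw [h, zero_mul] at he2
      norm_num at he2
    exact mul_left_cancel₀ hne (he1.trans he2.symm)
  intro k
  induction k with
  | zero => intro _; simpa using base
  | succ k ih =>
    intro hk
    have ihk := ih (by omega)
    have hpk1 : 1 ≤ p - k - 1 := by omega
    have hidx : (p - k - 1) + 1 = p - k := by omega
    have hfl : ⌊beta f (p - k)⌋ = cfA f (p - k - 1) := by
      have := floor_beta f hns hf2 (p - k - 1) hpk1
      rw [hidx] at this
      exact this
    have hA : cfA f (p - k - 1) = cfA f (k + 1) := by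
      rw [← hfl, ihk, ← cfA_floor f hns hf2 (k + 1)]
    have hetav : eta f (p - k - 1) = (cfA f (k + 1) : ℝ) - xi f (k + 1) := by
      have := beta_succ f hns (p - k - 1)
      rw [hidx, ihk, hA] at this
      linarith
    have hxm := xi_mul f hns (k + 1)
    have hb := eta_beta f hns hf2 (p - k - 1) hpk1
    rw [hetav] at hb
    have he1 : (xi f (k + 1) - (cfA f (k + 1) : ℝ)) * beta f (p - k - 1) = 1 := by
      linarith [hb]
    have hne : xi f (k + 1) - (cfA f (k + 1) : ℝ) ≠ 0 := by
      intro h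
      rw [h, zero_mul] at hxm
      norm_num at hxm
    have := mul_left_cancel₀ hne (he1.trans hxm.symm)
    rw [show p - (k + 1) = p - k - 1 by omega]
    exact this

lemma a_pal (hns : ¬ IsSquare f) (hf2 : 2 ≤ f) {p : ℕ} (hp2 : 2 ≤ p)
    (hst : rr f (1 + p) = rr f 1 ∧ ss f (1 + p) = ss f 1) :
    ∀ k, 1 ≤ k → k ≤ p - 1 → cfA f (p - k) = cfA f k := by
  intro k hk1 hk2
  have hC := claimC f hns hf2 hp2 hst (k - 1) (by omega)
  have hpk : 1 ≤ p - k := by omega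
  have hidx : (p - k) + 1 = p - (k - 1) := by omega
  have hfl : ⌊beta f (p - (k - 1))⌋ = cfA f (p - k) := by
    have := floor_beta f hns hf2 (p - k) hpk
    rw [hidx] at this
    exact this
  rw [show k - 1 + 1 = k by omega] at hC
  rw [← hfl, hC, ← cfA_floor f hns hf2 k]
open Matrix

def Mm (x : ℤ) : Matrix (Fin 2) (Fin 2) ℤ := !![x, 1; 1, 0]

def Pm (f : ℕ) (n : ℕ) : Matrix (Fin 2) (Fin 2) ℤ :=
  !![cfNum f (n + 2), cfNum f (n + 1); cfDen f (n + 2), cfDen f (n + 1)]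

def Qm (f : ℕ) : ℕ → Matrix (Fin 2) (Fin 2) ℤ
  | 0 => 1
  | j + 1 => Qm f j * Mm (cfA f (j + 1))

def Sm (f m : ℕ) : ℕ → Matrix (Fin 2) (Fin 2) ℤ
  | 0 => Mm (cfA f m)
  | j + 1 => Sm f m j * Mm (cfA f (m + j + 1))

def Tm (f m : ℕ) : ℕ → Matrix (Fin 2) (Fin 2) ℤ
  | 0 => Mm (cfA f m)
  | j + 1 => Mm (cfA f (m - (j + 1))) * Tm f m j

lemma Mm_transpose (x : ℤ) : (Mm x)ᵀ = Mm x := by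
  ext i j
  fin_cases i <;> fin_cases j <;> simp [Mm]

lemma Pm_succ (n : ℕ) : Pm f (n + 1) = Pm f n * Mm (cfA f (n + 1)) := by
  ext i j
  fin_cases i <;> fin_cases j <;>
    simp [Pm, Mm, Matrix.mul_apply, Fin.sum_univ_two, num_rec f (n + 1), den_rec f (n + 1)] <;>
    ring

lemma Pm_zero : Pm f 0 = Mm (cfA f 0) := by
  ext i j
  fin_cases i <;> fin_cases j <;>
    simp [Pm, Mm, num_rec f 0, den_rec f 0, cfNum, cfDen] <;>
    try ring

lemma MQ : ∀ n, Mm (cfA f 0) * Qm f n = Pm f n := by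
  intro n
  induction n with
  | zero => rw [Qm, mul_one, Pm_zero]
  | succ n ih => rw [Qm, ← mul_assoc, ih, ← Pm_succ]

lemma PS (m : ℕ) (hm : 1 ≤ m) : ∀ j, Pm f (m + j) = Pm f (m - 1) * Sm f m j := by
  intro j
  induction j with
  | zero =>
    show Pm f (m + 0) = Pm f (m - 1) * Mm (cfA f m)
    have h1 : m + 0 = (m - 1) + 1 := by omega
    have h2 : m = (m - 1) + 1 := by omega
    rw [h1, Pm_succ, ← h2]
  | succ j ih =>
    have h1 : m + (j + 1) = (m + j) + 1 := by ring
    rw [h1, Pm_succ, ih, Sm, mul_assoc]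

lemma ST (m : ℕ) (hm : 1 ≤ m)
    (ap : ∀ k, 1 ≤ k → k ≤ 2 * m - 1 → cfA f (2 * m - k) = cfA f k) :
    ∀ j, j ≤ m - 1 → (Sm f m j)ᵀ = Tm f m j := by
  intro j
  induction j with
  | zero => intro _; rw [Sm, Tm, Mm_transpose]
  | succ j ih =>
    intro hj
    rw [Sm, Matrix.transpose_mul, Mm_transpose, ih (by omega), Tm]
    have hk : cfA f (m + j + 1) = cfA f (m - (j + 1)) := by
      have := ap (m - (j + 1)) (by omega) (by omega)
      rw [show 2 * m - (m - (j + 1)) = m + j + 1 by omega] at this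
      exact this
    rw [hk]

lemma QT (m : ℕ) (hm : 1 ≤ m) : ∀ j, j ≤ m - 1 → Qm f (m - j - 1) * Tm f m j = Qm f m := by
  intro j
  induction j with
  | zero =>
    intro _
    rw [Tm]
    have h1 : m = (m - 1) + 1 := by omega
    have h2 : Qm f ((m - 1) + 1) = Qm f (m - 1) * Mm (cfA f ((m - 1) + 1)) := rfl
    rw [h1, h2, ← h1]
    rfl
  | succ j ih =>
    intro hj
    rw [Tm, ← mul_assoc]
    have h2 : Qm f ((m - j - 2) + 1) = Qm f (m - j - 2) * Mm (cfA f ((m - j - 2) + 1)) := rfl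
    have h3 : m - (j + 1) - 1 = m - j - 2 := by omega
    have h4 : (m - j - 2) + 1 = m - (j + 1) := by omega
    rw [h3, ← h4, ← h2, h4]
    have h5 : m - (j + 1) = m - j - 1 := by omega
    rw [h5]
    exact ih (by omega)

lemma final_ids (hns : ¬ IsSquare f) (hf2 : 2 ≤ f) {m : ℕ} (hm : 1 ≤ m)
    (hper : CFPeriod f (2 * m)) :
    cfNum f (2 * m + 1) = cfNum f (m + 1) * cfDen f (m + 2) + cfNum f m * cfDen f (m + 1) ∧
    cfDen f (2 * m + 1) = cfDen f (m + 1) * cfDen f (m + 2) + cfDen f m * cfDen f (m + 1) := by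
  have hp2 : 2 ≤ 2 * m := by omega
  have hst := state_period f hns hf2 hper.1.2 1 le_rfl
  have ap := a_pal f hns hf2 hp2 hst
  have hPS := PS f m hm (m - 1)
  have hST := ST f m hm ap (m - 1) le_rfl
  have hQT := QT f m hm (m - 1) le_rfl
  rw [show m - (m - 1) - 1 = 0 by omega] at hQT
  have hQm0 : Qm f 0 = 1 := rfl
  rw [hQm0, one_mul] at hQT
  have hSQ : Sm f m (m - 1) = (Qm f m)ᵀ := by
    rw [← hQT, ← hST, Matrix.transpose_transpose]
  have hmain : Pm f (m + (m - 1)) = Pm f (m - 1) * (Qm f m)ᵀ := by rw [hPS, hSQ]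
  have hMQ := MQ f m
  -- extract entries of Qm f m
  have hQ00 : Qm f m 0 0 = cfDen f (m + 2) := by
    have := congrFun (congrFun hMQ 1) 0
    simpa [Mm, Pm, Matrix.mul_apply, Fin.sum_univ_two] using this
  have hQ01 : Qm f m 0 1 = cfDen f (m + 1) := by
    have := congrFun (congrFun hMQ 1) 1
    simpa [Mm, Pm, Matrix.mul_apply, Fin.sum_univ_two] using this
  have hidx1 : m + (m - 1) + 2 = 2 * m + 1 := by omega
  have hidx2 : m + (m - 1) + 1 = 2 * m := by omega
  have hidx3 : m - 1 + 2 = m + 1 := by omega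
  have hidx4 : m - 1 + 1 = m := by omega
  constructor
  · have := congrFun (congrFun hmain 0) 0
    simp only [Pm, Matrix.mul_apply, Matrix.transpose_apply, Fin.sum_univ_two] at this
    rw [hidx1, hidx3, hidx4, hQ00, hQ01] at this
    simpa using this
  · have := congrFun (congrFun hmain 1) 0
    simp only [Pm, Matrix.mul_apply, Matrix.transpose_apply, Fin.sum_univ_two] at this
    rw [hidx1, hidx3, hidx4, hQ00, hQ01] at this
    simpa using this

end CF

theorem stmt_10 (f m : ℕ) (hf : 0 < f) (hns : ¬ IsSquare f) (hm : 1 ≤ m)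
    (hper : CFPeriod f (2 * m)) (c h : ℤ) (hfund : IsFundamentalPell f c h) :
    c = cfNum f (m + 2) * cfDen f (m + 1) + cfNum f (m + 1) * cfDen f m ∧
      h = cfDen f (m + 1) * (cfDen f (m + 2) + cfDen f m) := by
  have hf2 : 2 ≤ f := by
    rcases Nat.lt_or_ge f 2 with hlt | hge
    · exfalso
      have hf1 : f = 1 := by omega
      exact hns (hf1 ▸ ⟨1, rfl⟩)
    · exact hge
  obtain ⟨hc, hh, hpell, hmin⟩ := hfund
  set P := cfNum f (2 * m + 1) with hP
  set Q := cfDen f (2 * m + 1) with hQ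
  have hs2m : CF.ss f (2 * m) = 1 := CF.ss_p_one f hns hf2 (by omega) hper.1.2
  have hPell : P ^ 2 - (f : ℤ) * Q ^ 2 = 1 := by
    have := CF.pell_s f hns (2 * m)
    rw [hs2m, mul_one] at this
    rw [hP, hQ, this]
    exact Even.neg_one_pow ⟨m, by ring⟩
  have hPpos : 0 < P := by
    have h9 := (CF.num_facts f hns hf2 (2 * m)).1
    rw [hP]
    linarith
  have hQpos : 0 < Q := by
    have h9 := (CF.den_facts f hns hf2 (2 * m - 1)).1
    rw [show 2 * m - 1 + 2 = 2 * m + 1 by omega] at h9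
    rw [hQ]
    linarith
  have h1 : c ≤ P := hmin P Q hPpos hQpos hPell
  have h2 : P ≤ c := CF.sol_ge f hns hf2 hm hper c h hc hh hpell
  have hcP : c = P := le_antisymm h1 h2
  have hhQ : h = Q := by
    have hsq : h ^ 2 = Q ^ 2 := by
      have hfpos : (0 : ℤ) < (f : ℤ) := by exact_mod_cast hf
      have : (f : ℤ) * h ^ 2 = (f : ℤ) * Q ^ 2 := by
        rw [hcP] at hpell
        linarith [hPell, hpell]
      exact mul_left_cancel₀ (ne_of_gt hfpos) this
    have hfac : (h - Q) * (h + Q) = 0 := by linear_combination hsq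
    rcases mul_eq_zero.mp hfac with h3 | h3
    · omega
    · omega
  obtain ⟨hid1, hid2⟩ := CF.final_ids f hns hf2 hm hper
  have hnr : cfNum f (m + 2) = cfA f m * cfNum f (m + 1) + cfNum f m := rfl
  have hdr : cfDen f (m + 2) = cfA f m * cfDen f (m + 1) + cfDen f m := rfl
  constructor
  · rw [hcP, hP, hid1, hnr, hdr]; ring
  · rw [hhQ, hQ, hid2]; ring
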